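/- Let (X, Ξ) be a measurable space, 𝔄 a countable algebra of subsets of a set S₃, and for each x ∈ X let νˣ₁, νˣ₂ be finitely additive probability measures on subalgebras 𝔄₁, 𝔄₂ ⊆ 𝔄 such that x ↦ νˣ_j(A) is measurable for all A ∈ 𝔄_j (j=1,2) and νˣ₁(A₁) + νˣ₂(A₂) ≤ 1 whenever A₁ ∈ 𝔄₁, A₂ ∈ 𝔄₂ are disjoint. Then there exist finitely additive probability measures νˣ₃ on 𝔄 extending both νˣ₁ and νˣ₂ such that x ↦ νˣ₃(A) is measurable for every A ∈ 𝔄. -/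

import Mathlib

open Set MeasureTheory intervalIntegral


/-- An algebra (Boolean algebra) of subsets of `S`. -/
def IsSetAlg {S : Type*} (𝔄 : Set (Set S)) : Prop :=
  ∅ ∈ 𝔄 ∧ (∀ A ∈ 𝔄, Aᶜ ∈ 𝔄) ∧ (∀ A ∈ 𝔄, ∀ B ∈ 𝔄, A ∪ B ∈ 𝔄)

/-- A finitely additive probability measure on an algebra `𝔄`. -/
def IsFinAddProb {S : Type*} (𝔄 : Set (Set S)) (ν : Set S → ℝ) : Prop :=
  ν ∅ = 0 ∧ ν Set.univ = 1 ∧ (∀ A ∈ 𝔄, 0 ≤ ν A ∧ ν A ≤ 1) ∧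
    ∀ A ∈ 𝔄, ∀ B ∈ 𝔄, Disjoint A B → ν (A ∪ B) = ν A + ν B

namespace MCFAE

variable {S : Type*}

/-- real-valued indicator -/
noncomputable def ind (A : Set S) : S → ℝ := A.indicator 1

open Classical in
lemma ind_apply (A : Set S) (s : S) : ind A s = if s ∈ A then 1 else 0 := by
  simp [ind, Set.indicator]

lemma abs_ind_le (A : Set S) (s : S) : |ind A s| ≤ 1 := by
  classical
  rw [ind_apply]; split <;> norm_num

/-- generic finsupp pairing -/
noncomputable def fsum (φ : ℕ → ℝ) (w : ℕ →₀ ℚ) : ℝ := w.sum fun i q => (q : ℝ) * φ i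

lemma fsum_eq (φ : ℕ → ℝ) (w : ℕ →₀ ℚ) : fsum φ w = ∑ i ∈ w.support, (w i : ℝ) * φ i := rfl

@[simp] lemma fsum_zero (φ : ℕ → ℝ) : fsum φ 0 = 0 := by simp [fsum]

lemma fsum_add (φ : ℕ → ℝ) (w v : ℕ →₀ ℚ) : fsum φ (w + v) = fsum φ w + fsum φ v := by
  classical
  exact Finsupp.sum_add_index' (by simp) (by intro i b c; push_cast; ring)

lemma fsum_smul (φ : ℕ → ℝ) (q : ℚ) (w : ℕ →₀ ℚ) : fsum φ (q • w) = (q : ℝ) * fsum φ w := by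
  classical
  rw [fsum, Finsupp.sum_smul_index' (by simp)]
  rw [fsum, Finsupp.mul_sum]
  apply Finsupp.sum_congr
  intro i _
  rw [smul_eq_mul]
  push_cast
  ring

lemma fsum_neg (φ : ℕ → ℝ) (w : ℕ →₀ ℚ) : fsum φ (-w) = -fsum φ w := by
  have := fsum_smul φ (-1) w
  simpa using this

lemma fsum_sub (φ : ℕ → ℝ) (w v : ℕ →₀ ℚ) : fsum φ (w - v) = fsum φ w - fsum φ v := by
  rw [sub_eq_add_neg, fsum_add, fsum_neg, sub_eq_add_neg]

lemma fsum_single (φ : ℕ → ℝ) (n : ℕ) (q : ℚ) :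
    fsum φ (Finsupp.single n q) = (q : ℝ) * φ n := by
  classical
  rw [fsum, Finsupp.sum_single_index (by simp)]

lemma fsum_congr {φ ψ : ℕ → ℝ} (w : ℕ →₀ ℚ) (h : ∀ i ∈ w.support, φ i = ψ i) :
    fsum φ w = fsum ψ w := by
  apply Finset.sum_congr rfl
  intro i hi; simp only []; rw [h i hi]

lemma abs_fsum_le {φ : ℕ → ℝ} (w : ℕ →₀ ℚ) (h : ∀ i, |φ i| ≤ 1) :
    |fsum φ w| ≤ ∑ i ∈ w.support, |(w i : ℝ)| := by
  refine (Finset.abs_sum_le_sum_abs _ _).trans ?_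
  apply Finset.sum_le_sum
  intro i _
  rw [abs_mul]
  calc |(w i : ℝ)| * |φ i| ≤ |(w i : ℝ)| * 1 :=
        mul_le_mul_of_nonneg_left (h i) (abs_nonneg _)
    _ = |(w i : ℝ)| := mul_one _

/-- the combination function -/
noncomputable def Phi (E : ℕ → Set S) (w : ℕ →₀ ℚ) (s : S) : ℝ := fsum (fun i => ind (E i) s) w

lemma abs_Phi_le (E : ℕ → Set S) (w : ℕ →₀ ℚ) (s : S) :
    |Phi E w s| ≤ ∑ i ∈ w.support, |(w i : ℝ)| :=
  abs_fsum_le w (fun i => abs_ind_le _ _)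

/-- integral of a simple combination -/
noncomputable def Jint (ν : Set S → ℝ) (E : ℕ → Set S) (c : ℕ →₀ ℚ) : ℝ :=
  fsum (fun i => ν (E i)) c

/-- boundedness predicate -/
def BddF (f : S → ℝ) : Prop := ∃ B, ∀ s, |f s| ≤ B

lemma BddF.bddAbove {f : S → ℝ} (h : BddF f) : BddAbove (Set.range f) := by
  obtain ⟨B, hB⟩ := h
  exact ⟨B, by rintro _ ⟨s, rfl⟩; exact (abs_le.1 (hB s)).2⟩

lemma bddF_Phi (E : ℕ → Set S) (w : ℕ →₀ ℚ) : BddF (Phi E w) :=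
  ⟨_, abs_Phi_le E w⟩

lemma bddF_ind (A : Set S) : BddF (ind A) := ⟨1, abs_ind_le A⟩

lemma BddF.add {f g : S → ℝ} (hf : BddF f) (hg : BddF g) : BddF (fun s => f s + g s) := by
  obtain ⟨B, hB⟩ := hf; obtain ⟨C, hC⟩ := hg
  exact ⟨B + C, fun s => (abs_add_le _ _).trans (add_le_add (hB s) (hC s))⟩

lemma BddF.neg {f : S → ℝ} (hf : BddF f) : BddF (fun s => -f s) := by
  obtain ⟨B, hB⟩ := hf
  exact ⟨B, fun s => by rw [abs_neg]; exact hB s⟩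

lemma BddF.sub {f g : S → ℝ} (hf : BddF f) (hg : BddF g) : BddF (fun s => f s - g s) := by
  simpa [sub_eq_add_neg] using hf.add hg.neg

lemma BddF.const_mul {f : S → ℝ} (hf : BddF f) (r : ℝ) : BddF (fun s => r * f s) := by
  obtain ⟨B, hB⟩ := hf
  exact ⟨|r| * B, fun s => by
    rw [abs_mul]
    exact mul_le_mul_of_nonneg_left (hB s) (abs_nonneg r)⟩

/-- sup functional -/
noncomputable def msup (f : S → ℝ) : ℝ := ⨆ s, f s

variable [Nonempty S]

lemma msup_le {f : S → ℝ} {B : ℝ} (h : ∀ s, f s ≤ B) : msup f ≤ B := ciSup_le h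

lemma le_msup {f : S → ℝ} (hf : BddF f) (s : S) : f s ≤ msup f := le_ciSup hf.bddAbove s

lemma msup_add_le {f g : S → ℝ} (hf : BddF f) (hg : BddF g) :
    msup (fun s => f s + g s) ≤ msup f + msup g :=
  msup_le fun s => add_le_add (le_msup hf s) (le_msup hg s)

lemma msup_const_mul {f : S → ℝ} {r : ℝ} (hr : 0 < r) (hf : BddF f) :
    msup (fun s => r * f s) = r * msup f := by
  apply le_antisymm
  · exact msup_le fun s => mul_le_mul_of_nonneg_left (le_msup hf s) hr.le
  · have h2 : msup f ≤ r⁻¹ * msup (fun s => r * f s) := by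
      apply msup_le
      intro s
      have : r * f s ≤ msup (fun s => r * f s) := le_msup (hf.const_mul r) s
      calc f s = r⁻¹ * (r * f s) := by field_simp
        _ ≤ r⁻¹ * msup (fun s => r * f s) :=
            mul_le_mul_of_nonneg_left this (inv_nonneg.2 hr.le)
    calc r * msup f ≤ r * (r⁻¹ * msup (fun s => r * f s)) :=
          mul_le_mul_of_nonneg_left h2 hr.le
      _ = msup (fun s => r * f s) := by field_simp


section Alg

variable {S : Type*} {𝔅 : Set (Set S)} (halg : IsSetAlg 𝔅)
include halg

lemma univ_mem : Set.univ ∈ 𝔅 := by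
  have := halg.2.1 ∅ halg.1
  simpa using this

lemma inter_mem {A B : Set S} (hA : A ∈ 𝔅) (hB : B ∈ 𝔅) : A ∩ B ∈ 𝔅 := by
  have : A ∩ B = (Aᶜ ∪ Bᶜ)ᶜ := by simp [Set.compl_union]
  rw [this]
  exact halg.2.1 _ (halg.2.2 _ (halg.2.1 _ hA) _ (halg.2.1 _ hB))

lemma biInter_mem {ι : Type*} (F : Finset ι) (g : ι → Set S) (h : ∀ i ∈ F, g i ∈ 𝔅) :
    (⋂ i ∈ F, g i) ∈ 𝔅 := by
  classical
  induction F using Finset.induction_on with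
  | empty => simpa using univ_mem halg
  | @insert a F' ha ih =>
    rw [Finset.set_biInter_insert]
    exact inter_mem halg (h a (Finset.mem_insert_self _ _))
      (ih fun i hi => h i (Finset.mem_insert_of_mem hi))

lemma biUnion_mem {ι : Type*} (F : Finset ι) (g : ι → Set S) (h : ∀ i ∈ F, g i ∈ 𝔅) :
    (⋃ i ∈ F, g i) ∈ 𝔅 := by
  classical
  induction F using Finset.induction_on with
  | empty => simpa using halg.1
  | @insert a F' ha ih =>
    rw [Finset.set_biUnion_insert]
    exact halg.2.2 _ (h a (Finset.mem_insert_self _ _)) _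
      (ih fun i hi => h i (Finset.mem_insert_of_mem hi))

variable {ν : Set S → ℝ} (hν : IsFinAddProb 𝔅 ν)
include hν

lemma nu_biUnion {ι : Type*} (F : Finset ι) (g : ι → Set S) (hmem : ∀ i ∈ F, g i ∈ 𝔅)
    (hdis : ∀ i ∈ F, ∀ j ∈ F, i ≠ j → Disjoint (g i) (g j)) :
    ν (⋃ i ∈ F, g i) = ∑ i ∈ F, ν (g i) := by
  classical
  induction F using Finset.induction_on with
  | empty => simpa using hν.1
  | @insert a F' ha ih =>
    rw [Finset.set_biUnion_insert, Finset.sum_insert ha]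
    have hmem' : ∀ i ∈ F', g i ∈ 𝔅 := fun i hi => hmem i (Finset.mem_insert_of_mem hi)
    have hdis' : ∀ i ∈ F', ∀ j ∈ F', i ≠ j → Disjoint (g i) (g j) :=
      fun i hi j hj => hdis i (Finset.mem_insert_of_mem hi) j (Finset.mem_insert_of_mem hj)
    rw [← ih hmem' hdis']
    apply hν.2.2.2 _ (hmem a (Finset.mem_insert_self _ _)) _ (biUnion_mem halg F' g hmem')
    rw [Set.disjoint_iUnion₂_right]
    intro i hi
    exact hdis a (Finset.mem_insert_self _ _) i (Finset.mem_insert_of_mem hi)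
      (fun h => ha (h ▸ hi))

end Alg

section Layer

variable {S : Type*}

open Classical in
/-- atom of the family indexed by `T` -/
noncomputable def atomP (E : ℕ → Set S) (c : ℕ →₀ ℚ) (T : Finset ℕ) : Set S :=
  ⋂ i ∈ c.support, (if i ∈ T then E i else (E i)ᶜ)

noncomputable def aval (c : ℕ →₀ ℚ) (T : Finset ℕ) : ℝ := ∑ i ∈ T, (c i : ℝ)

open Classical in
noncomputable def atomOf (E : ℕ → Set S) (c : ℕ →₀ ℚ) (s : S) : Finset ℕ :=
  c.support.filter (fun i => s ∈ E i)

lemma mem_atomP {E : ℕ → Set S} {c : ℕ →₀ ℚ} {T : Finset ℕ} {s : S} :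
    s ∈ atomP E c T ↔ ∀ i ∈ c.support, (s ∈ E i ↔ i ∈ T) := by
  classical
  simp only [atomP, Set.mem_iInter]
  constructor
  · intro h i hi
    have := h i hi
    split at this
    · simp_all
    · simp_all
  · intro h i hi
    by_cases hT : i ∈ T
    · simp only [if_pos hT]; exact (h i hi).2 hT
    · simp only [if_neg hT]
      intro hs
      exact hT ((h i hi).1 hs)

lemma mem_atomP_atomOf (E : ℕ → Set S) (c : ℕ →₀ ℚ) (s : S) :
    s ∈ atomP E c (atomOf E c s) := by
  classical
  rw [mem_atomP]
  intro i hi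
  simp [atomOf, hi]

lemma atomOf_mem_pws (E : ℕ → Set S) (c : ℕ →₀ ℚ) (s : S) :
    atomOf E c s ∈ c.support.powerset := by
  classical
  simp [atomOf, Finset.mem_powerset, Finset.filter_subset]

lemma atomOf_eq {E : ℕ → Set S} {c : ℕ →₀ ℚ} {T : Finset ℕ} {s : S}
    (hT : T ⊆ c.support) (hs : s ∈ atomP E c T) : atomOf E c s = T := by
  classical
  rw [mem_atomP] at hs
  ext i
  simp only [atomOf, Finset.mem_filter]
  constructor
  · rintro ⟨hi, hEi⟩
    exact (hs i hi).1 hEi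
  · intro hi
    exact ⟨hT hi, (hs i (hT hi)).2 hi⟩

lemma val_atomOf (E : ℕ → Set S) (c : ℕ →₀ ℚ) (s : S) :
    Phi E c s = aval c (atomOf E c s) := by
  classical
  rw [Phi, fsum_eq, aval]
  rw [show atomOf E c s = c.support.filter (fun i => s ∈ E i) from rfl]
  rw [Finset.sum_filter]
  apply Finset.sum_congr rfl
  intro i _
  rw [ind_apply]
  split <;> simp

lemma set_univ_eq (E : ℕ → Set S) (c : ℕ →₀ ℚ) :
    (Set.univ : Set S) = ⋃ T ∈ c.support.powerset, atomP E c T := by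
  ext s
  simp only [Set.mem_univ, true_iff, Set.mem_iUnion]
  exact ⟨atomOf E c s, atomOf_mem_pws E c s, mem_atomP_atomOf E c s⟩

open Classical in
lemma set_E_eq (E : ℕ → Set S) (c : ℕ →₀ ℚ) {i : ℕ} (hi : i ∈ c.support) :
    E i = ⋃ T ∈ c.support.powerset.filter (fun T => i ∈ T), atomP E c T := by
  ext s
  simp only [Set.mem_iUnion, Finset.mem_filter]
  constructor
  · intro hs
    refine ⟨atomOf E c s, ⟨atomOf_mem_pws E c s, ?_⟩, mem_atomP_atomOf E c s⟩
    simp [atomOf, hi, hs]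
  · rintro ⟨T, ⟨hT, hiT⟩, hs⟩
    exact (mem_atomP.1 hs i hi).2 hiT

open Classical in
lemma set_level_eq (E : ℕ → Set S) (c : ℕ →₀ ℚ) (t : ℝ) :
    {s | t < Phi E c s} =
      ⋃ T ∈ c.support.powerset.filter (fun T => t < aval c T), atomP E c T := by
  ext s
  simp only [Set.mem_setOf_eq, Set.mem_iUnion, Finset.mem_filter]
  constructor
  · intro hs
    refine ⟨atomOf E c s, ⟨atomOf_mem_pws E c s, ?_⟩, mem_atomP_atomOf E c s⟩
    rwa [← val_atomOf]
  · rintro ⟨T, ⟨hT, hta⟩, hs⟩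
    rw [val_atomOf E c s, atomOf_eq (Finset.mem_powerset.1 hT) hs]
    exact hta

variable {𝔅 : Set (Set S)} {ν : Set S → ℝ}

lemma atomP_mem (halg : IsSetAlg 𝔅) {E : ℕ → Set S} (hE : ∀ i, E i ∈ 𝔅)
    (c : ℕ →₀ ℚ) (T : Finset ℕ) : atomP E c T ∈ 𝔅 := by
  classical
  apply biInter_mem halg
  intro i _
  split
  · exact hE i
  · exact halg.2.1 _ (hE i)

lemma atomP_pairwise_disjoint (E : ℕ → Set S) (c : ℕ →₀ ℚ) :
    ∀ T ∈ c.support.powerset, ∀ T' ∈ c.support.powerset, T ≠ T' →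
      Disjoint (atomP E c T) (atomP E c T') := by
  intro T hT T' hT' hne
  rw [Set.disjoint_left]
  intro s hs hs'
  apply hne
  rw [← atomOf_eq (Finset.mem_powerset.1 hT) hs,
    ← atomOf_eq (Finset.mem_powerset.1 hT') hs']

lemma nu_filter (halg : IsSetAlg 𝔅) (hν : IsFinAddProb 𝔅 ν) {E : ℕ → Set S}
    (hE : ∀ i, E i ∈ 𝔅) (c : ℕ →₀ ℚ) (q : Finset ℕ → Prop) [DecidablePred q] :
    ν (⋃ T ∈ c.support.powerset.filter q, atomP E c T) =
      ∑ T ∈ c.support.powerset, if q T then ν (atomP E c T) else 0 := by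
  classical
  rw [nu_biUnion halg hν _ _ (fun T _ => atomP_mem halg hE c T)
    (fun T hT T' hT' hne => atomP_pairwise_disjoint E c T
      (Finset.mem_of_mem_filter _ hT) T' (Finset.mem_of_mem_filter _ hT') hne),
    Finset.sum_filter]

lemma level_mem (halg : IsSetAlg 𝔅) {E : ℕ → Set S} (hE : ∀ i, E i ∈ 𝔅)
    (c : ℕ →₀ ℚ) (t : ℝ) : {s | t < Phi E c s} ∈ 𝔅 := by
  classical
  rw [set_level_eq]
  exact biUnion_mem halg _ _ (fun T _ => atomP_mem halg hE c T)

lemma nu_level (halg : IsSetAlg 𝔅) (hν : IsFinAddProb 𝔅 ν) {E : ℕ → Set S}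
    (hE : ∀ i, E i ∈ 𝔅) (c : ℕ →₀ ℚ) (t : ℝ) :
    ν {s | t < Phi E c s} =
      ∑ T ∈ c.support.powerset, if t < aval c T then ν (atomP E c T) else 0 := by
  classical
  rw [set_level_eq, nu_filter halg hν hE c]

lemma nu_total (halg : IsSetAlg 𝔅) (hν : IsFinAddProb 𝔅 ν) {E : ℕ → Set S}
    (hE : ∀ i, E i ∈ 𝔅) (c : ℕ →₀ ℚ) :
    ∑ T ∈ c.support.powerset, ν (atomP E c T) = 1 := by
  classical
  rw [← hν.2.1, set_univ_eq E c,
    nu_biUnion halg hν _ _ (fun T _ => atomP_mem halg hE c T)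
      (atomP_pairwise_disjoint E c)]

lemma J_eq_atoms (halg : IsSetAlg 𝔅) (hν : IsFinAddProb 𝔅 ν) {E : ℕ → Set S}
    (hE : ∀ i, E i ∈ 𝔅) (c : ℕ →₀ ℚ) :
    Jint ν E c = ∑ T ∈ c.support.powerset, aval c T * ν (atomP E c T) := by
  classical
  have hEν : ∀ i ∈ c.support, ν (E i) =
      ∑ T ∈ c.support.powerset, if i ∈ T then ν (atomP E c T) else 0 := by
    intro i hi
    rw [set_E_eq E c hi, nu_filter halg hν hE c]
  rw [Jint, fsum_eq]
  calc ∑ i ∈ c.support, (c i : ℝ) * ν (E i)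
      = ∑ i ∈ c.support, ∑ T ∈ c.support.powerset,
          (if i ∈ T then (c i : ℝ) * ν (atomP E c T) else 0) := by
        apply Finset.sum_congr rfl
        intro i hi
        rw [hEν i hi, Finset.mul_sum]
        apply Finset.sum_congr rfl
        intro T _
        rw [mul_ite, mul_zero]
    _ = ∑ T ∈ c.support.powerset, ∑ i ∈ c.support,
          (if i ∈ T then (c i : ℝ) * ν (atomP E c T) else 0) := Finset.sum_comm
    _ = ∑ T ∈ c.support.powerset, aval c T * ν (atomP E c T) := by
        apply Finset.sum_congr rfl
        intro T hT
        rw [Finset.sum_ite_mem, Finset.inter_eq_right.mpr (Finset.mem_powerset.1 hT),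
          aval, Finset.sum_mul]

open Classical in
lemma int_ite {p α a b : ℝ} (ha : a ≤ α) (hb : α ≤ b) :
    ∫ t in a..b, (if t < α then p else 0) = p * (α - a) := by
  have hfun : (fun t => if t < α then p else 0) = (Set.Iio α).indicator (fun _ => p) := by
    funext t; simp [Set.indicator, Set.mem_Iio]
  rw [hfun, intervalIntegral.integral_of_le (ha.trans hb),
    MeasureTheory.setIntegral_indicator measurableSet_Iio]
  have hset : Set.Ioc a b ∩ Set.Iio α = Set.Ioo a α := by
    ext t
    simp only [Set.mem_inter_iff, Set.mem_Ioc, Set.mem_Iio, Set.mem_Ioo]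
    constructor
    · rintro ⟨⟨h1, _⟩, h2⟩; exact ⟨h1, h2⟩
    · rintro ⟨h1, h2⟩; exact ⟨⟨h1, le_of_lt (lt_of_lt_of_le h2 hb)⟩, h2⟩
  rw [hset, MeasureTheory.setIntegral_const, Real.volume_real_Ioo_of_le ha,
    smul_eq_mul, mul_comm]

open Classical in
lemma intInt_ite (p α : ℝ) (a b : ℝ) :
    IntervalIntegrable (fun t => if t < α then p else 0) volume a b := by
  have hfun : (fun t => if t < α then p else 0) = (Set.Iio α).indicator (fun _ => p) := by
    funext t; simp [Set.indicator, Set.mem_Iio]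
  rw [hfun, intervalIntegrable_iff]
  exact (MeasureTheory.integrableOn_const measure_Ioc_lt_top.ne).indicator
    measurableSet_Iio

lemma layer_integrable (halg : IsSetAlg 𝔅) (hν : IsFinAddProb 𝔅 ν) {E : ℕ → Set S}
    (hE : ∀ i, E i ∈ 𝔅) (c : ℕ →₀ ℚ) (a b : ℝ) :
    IntervalIntegrable (fun t => ν {s | t < Phi E c s}) volume a b := by
  classical
  have hfun : (fun t => ν {s | t < Phi E c s}) = (fun t =>
      ∑ T ∈ c.support.powerset, if t < aval c T then ν (atomP E c T) else 0) := by
    funext t; exact nu_level halg hν hE c t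
  rw [hfun]
  have h := IntervalIntegrable.sum (μ := volume) (a := a) (b := b) c.support.powerset
    (f := fun T (t : ℝ) => if t < aval c T then ν (atomP E c T) else 0)
    (fun T _ => intInt_ite _ _ _ _)
  have heq : (∑ T ∈ c.support.powerset,
        fun (t : ℝ) => if t < aval c T then ν (atomP E c T) else 0)
      = (fun t => ∑ T ∈ c.support.powerset,
          if t < aval c T then ν (atomP E c T) else 0) := by
    funext t; simp [Finset.sum_apply]
  rwa [heq] at h

lemma layer_formula (halg : IsSetAlg 𝔅) (hν : IsFinAddProb 𝔅 ν) {E : ℕ → Set S}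
    (hE : ∀ i, E i ∈ 𝔅) (c : ℕ →₀ ℚ) {a b : ℝ}
    (ha : ∀ s, a ≤ Phi E c s) (hb : ∀ s, Phi E c s ≤ b) :
    Jint ν E c = a + ∫ t in a..b, ν {s | t < Phi E c s} := by
  classical
  have hfun : (fun t => ν {s | t < Phi E c s}) = (fun t =>
      ∑ T ∈ c.support.powerset, if t < aval c T then ν (atomP E c T) else 0) := by
    funext t; exact nu_level halg hν hE c t
  have hint : ∫ t in a..b, ν {s | t < Phi E c s}
      = ∑ T ∈ c.support.powerset, ν (atomP E c T) * (aval c T - a) := by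
    rw [hfun, intervalIntegral.integral_finset_sum
      (f := fun T (t : ℝ) => if t < aval c T then ν (atomP E c T) else 0)
      (fun T _ => intInt_ite _ _ _ _)]
    apply Finset.sum_congr rfl
    intro T hT
    by_cases hne : (atomP E c T).Nonempty
    · obtain ⟨s, hs⟩ := hne
      have hval : Phi E c s = aval c T := by
        rw [val_atomOf, atomOf_eq (Finset.mem_powerset.1 hT) hs]
      refine int_ite ?_ ?_
      · rw [← hval]; exact ha s
      · rw [← hval]; exact hb s
    · have hemp : atomP E c T = ∅ := Set.not_nonempty_iff_eq_empty.1 hne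
      have h0 : ν (atomP E c T) = 0 := by rw [hemp]; exact hν.1
      rw [h0]
      simp
  rw [hint, J_eq_atoms halg hν hE c]
  have h1 : ∑ T ∈ c.support.powerset, ν (atomP E c T) * (aval c T - a)
      = (∑ T ∈ c.support.powerset, aval c T * ν (atomP E c T))
        - a * ∑ T ∈ c.support.powerset, ν (atomP E c T) := by
    rw [Finset.mul_sum, ← Finset.sum_sub_distrib]
    apply Finset.sum_congr rfl
    intro T _
    ring
  rw [h1, nu_total halg hν hE c]
  ring

end Layer

section Strassen

variable {S : Type*} [Nonempty S] {𝔄₁ 𝔄₂ : Set (Set S)} {ν₁ ν₂ : Set S → ℝ}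

lemma strassen (halg₁ : IsSetAlg 𝔄₁) (halg₂ : IsSetAlg 𝔄₂)
    (hν₁ : IsFinAddProb 𝔄₁ ν₁) (hν₂ : IsFinAddProb 𝔄₂ ν₂)
    {e₁ e₂ : ℕ → Set S} (he₁ : ∀ i, e₁ i ∈ 𝔄₁) (he₂ : ∀ i, e₂ i ∈ 𝔄₂)
    (hcomp : ∀ A₁ ∈ 𝔄₁, ∀ A₂ ∈ 𝔄₂, Disjoint A₁ A₂ → ν₁ A₁ + ν₂ A₂ ≤ 1)
    (c d : ℕ →₀ ℚ) :
    Jint ν₁ e₁ c + Jint ν₂ e₂ d ≤ msup (fun s => Phi e₁ c s + Phi e₂ d s) := by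
  set C₁ := ∑ i ∈ c.support, |(c i : ℝ)| with hC₁
  set C₂ := ∑ i ∈ d.support, |(d i : ℝ)| with hC₂
  set m := msup (fun s => Phi e₁ c s + Phi e₂ d s) with hm
  have hbs : BddF (fun s => Phi e₁ c s + Phi e₂ d s) := (bddF_Phi e₁ c).add (bddF_Phi e₂ d)
  have hub : ∀ s, Phi e₁ c s + Phi e₂ d s ≤ m := fun s => le_msup hbs s
  have ha1 : ∀ s, -C₁ ≤ Phi e₁ c s := fun s => neg_le_of_abs_le (abs_Phi_le e₁ c s)
  have ha2 : ∀ s, -C₂ ≤ Phi e₂ d s := fun s => neg_le_of_abs_le (abs_Phi_le e₂ d s)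
  have hb1 : ∀ s, Phi e₁ c s ≤ m + C₂ := fun s => by
    have h1 := hub s; have h2 := ha2 s; linarith
  have hb2 : ∀ s, Phi e₂ d s ≤ m + C₁ := fun s => by
    have h1 := hub s; have h2 := ha1 s; linarith
  obtain ⟨s₀⟩ := (inferInstance : Nonempty S)
  have hord : -C₁ ≤ m + C₂ := le_trans (ha1 s₀) (hb1 s₀)
  have hJ1 : Jint ν₁ e₁ c = -C₁ + ∫ t in (-C₁)..(m + C₂), ν₁ {s | t < Phi e₁ c s} :=
    layer_formula halg₁ hν₁ he₁ c ha1 hb1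
  have hJ2 : Jint ν₂ e₂ d = -C₂ + ∫ t in (-C₂)..(m + C₁), ν₂ {s | t < Phi e₂ d s} :=
    layer_formula halg₂ hν₂ he₂ d ha2 hb2
  have hcv := intervalIntegral.integral_comp_sub_left (a := -C₁) (b := m + C₂)
      (fun u => ν₂ {s | u < Phi e₂ d s}) m
  rw [show m - (m + C₂) = -C₂ by ring, show m - -C₁ = m + C₁ by ring] at hcv
  have int1 : IntervalIntegrable (fun t => ν₁ {s | t < Phi e₁ c s}) volume (-C₁) (m + C₂) :=
    layer_integrable halg₁ hν₁ he₁ c _ _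
  have int2 : IntervalIntegrable (fun t => ν₂ {s | m - t < Phi e₂ d s}) volume (-C₁) (m + C₂) := by
    have h := (layer_integrable halg₂ hν₂ he₂ d (-C₂) (m + C₁)).comp_sub_left m
    rw [show m - -C₂ = m + C₂ by ring, show m - (m + C₁) = -C₁ by ring] at h
    exact h.symm
  have hpt : ∀ t, ν₁ {s | t < Phi e₁ c s} + ν₂ {s | m - t < Phi e₂ d s} ≤ 1 := by
    intro t
    apply hcomp _ (level_mem halg₁ he₁ c t) _ (level_mem halg₂ he₂ d (m - t))
    rw [Set.disjoint_left]
    intro s hs1 hs2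
    simp only [Set.mem_setOf_eq] at hs1 hs2
    have := hub s
    linarith
  have hmono : ∫ t in (-C₁)..(m + C₂),
        (ν₁ {s | t < Phi e₁ c s} + ν₂ {s | m - t < Phi e₂ d s})
      ≤ ∫ _ in (-C₁)..(m + C₂), (1 : ℝ) :=
    intervalIntegral.integral_mono_on hord (int1.add int2) intervalIntegrable_const
      (fun t _ => hpt t)
  rw [intervalIntegral.integral_add int1 int2, intervalIntegral.integral_const,
    smul_eq_mul, mul_one] at hmono
  rw [hJ1, hJ2, ← hcv] at *
  linarith
end Strassen

section HB

variable {S : Type*}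

/-- more `fsum`/`Phi` decomposition lemmas -/
lemma fsum_decomp (φ : ℕ → ℝ) (w : ℕ →₀ ℚ) (n : ℕ) :
    fsum φ w = fsum φ (w.erase n) + (w n : ℝ) * φ n := by
  conv_lhs => rw [← Finsupp.erase_add_single n w]
  rw [fsum_add, fsum_single]

lemma Phi_apply_decomp (E : ℕ → Set S) (w : ℕ →₀ ℚ) (n : ℕ) (s : S) :
    Phi E w s = Phi E (w.erase n) s + (w n : ℝ) * ind (E n) s :=
  fsum_decomp _ w n

lemma Phi_smul_apply (E : ℕ → Set S) (r : ℚ) (w : ℕ →₀ ℚ) (s : S) :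
    Phi E (r • w) s = (r : ℝ) * Phi E w s := fsum_smul _ r w

lemma Jint_smul (ν : Set S → ℝ) (E : ℕ → Set S) (r : ℚ) (c : ℕ →₀ ℚ) :
    Jint ν E (r • c) = (r : ℝ) * Jint ν E c := fsum_smul _ r c

@[simp] lemma Jint_zero (ν : Set S → ℝ) (E : ℕ → Set S) : Jint ν E 0 = 0 := fsum_zero _

@[simp] lemma Phi_zero_apply (E : ℕ → Set S) (s : S) : Phi E 0 s = 0 := fsum_zero _

/-- index type for the supremum defining the next value -/
def HBIdx (n : ℕ) : Type :=
  {w : ℕ →₀ ℚ // ∀ i ∈ w.support, i < n} × ((ℕ →₀ ℚ) × (ℕ →₀ ℚ))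

instance (n : ℕ) : Nonempty (HBIdx n) := ⟨⟨⟨0, by simp⟩, 0, 0⟩⟩
instance (n : ℕ) : Countable (HBIdx n) := by unfold HBIdx; infer_instance

variable (e e₁ e₂ : ℕ → Set S) (ν₁ ν₂ : Set S → ℝ)

noncomputable def gval (m : ℕ → ℝ) (n : ℕ) (p : HBIdx n) : ℝ :=
  fsum m p.1.1 + Jint ν₁ e₁ p.2.1 + Jint ν₂ e₂ p.2.2
    - msup (fun s => Phi e p.1.1 s + Phi e₁ p.2.1 s + Phi e₂ p.2.2 s - ind (e n) s)

noncomputable def hbval (m : ℕ → ℝ) (n : ℕ) : ℝ := ⨆ p : HBIdx n, gval e e₁ e₂ ν₁ ν₂ m n p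

noncomputable def hbseq : ℕ → ℕ → ℝ
  | 0 => fun _ => 0
  | n + 1 => Function.update (hbseq n) n (hbval e e₁ e₂ ν₁ ν₂ (hbseq n) n)

noncomputable def mu (n : ℕ) : ℝ := hbseq e e₁ e₂ ν₁ ν₂ (n + 1) n

lemma hbseq_eq (k n : ℕ) (h : n < k) :
    hbseq e e₁ e₂ ν₁ ν₂ k n = mu e e₁ e₂ ν₁ ν₂ n := by
  induction k with
  | zero => omega
  | succ k ih =>
    by_cases hn : n = k
    · subst hn; rfl
    · have hlt : n < k := by omega
      show Function.update (hbseq e e₁ e₂ ν₁ ν₂ k) k _ n = _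
      rw [Function.update_of_ne hn]
      exact ih hlt

def HBGood (n : ℕ) (m : ℕ → ℝ) : Prop :=
  ∀ (w c d : ℕ →₀ ℚ), (∀ i ∈ w.support, i < n) →
    fsum m w + Jint ν₁ e₁ c + Jint ν₂ e₂ d ≤
      msup (fun s => Phi e w s + Phi e₁ c s + Phi e₂ d s)

lemma good_congr {n : ℕ} {m m' : ℕ → ℝ} (h : ∀ i < n, m i = m' i)
    (hg : HBGood e e₁ e₂ ν₁ ν₂ n m) : HBGood e e₁ e₂ ν₁ ν₂ n m' := by
  intro w c d hw
  have : fsum m' w = fsum m w := fsum_congr w (fun i hi => (h i (hw i hi)).symm)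
  rw [this]
  exact hg w c d hw

variable [Nonempty S]

lemma good_zero {𝔄₁ 𝔄₂ : Set (Set S)} (halg₁ : IsSetAlg 𝔄₁) (halg₂ : IsSetAlg 𝔄₂)
    (hν₁ : IsFinAddProb 𝔄₁ ν₁) (hν₂ : IsFinAddProb 𝔄₂ ν₂)
    (he₁ : ∀ i, e₁ i ∈ 𝔄₁) (he₂ : ∀ i, e₂ i ∈ 𝔄₂)
    (hcomp : ∀ A₁ ∈ 𝔄₁, ∀ A₂ ∈ 𝔄₂, Disjoint A₁ A₂ → ν₁ A₁ + ν₂ A₂ ≤ 1)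
    (m : ℕ → ℝ) : HBGood e e₁ e₂ ν₁ ν₂ 0 m := by
  intro w c d hw
  have hw0 : w = 0 := by
    rw [← Finsupp.support_eq_empty]
    rw [Finset.eq_empty_iff_forall_notMem]
    intro i hi
    exact Nat.not_lt_zero i (hw i hi)
  subst hw0
  have hfun : (fun s => Phi e (0 : ℕ →₀ ℚ) s + Phi e₁ c s + Phi e₂ d s)
      = fun s => Phi e₁ c s + Phi e₂ d s := by
    funext s; rw [Phi_zero_apply]; ring
  rw [hfun, fsum_zero]
  have := strassen halg₁ halg₂ hν₁ hν₂ he₁ he₂ hcomp c d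
  linarith

lemma gval_le {m : ℕ → ℝ} {n : ℕ} (hg : HBGood e e₁ e₂ ν₁ ν₂ n m)
    (p : HBIdx n) (w' c' d' : ℕ →₀ ℚ) (hw' : ∀ i ∈ w'.support, i < n) :
    gval e e₁ e₂ ν₁ ν₂ m n p ≤
      msup (fun s => Phi e w' s + Phi e₁ c' s + Phi e₂ d' s + ind (e n) s)
        - (fsum m w' + Jint ν₁ e₁ c' + Jint ν₂ e₂ d') := by
  obtain ⟨⟨w, hw⟩, c, d⟩ := p
  have hsupp : ∀ i ∈ (w + w').support, i < n := by
    intro i hi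
    rcases Finset.mem_union.1 (Finsupp.support_add hi) with h | h
    exacts [hw i h, hw' i h]
  have key := hg (w + w') (c + c') (d + d') hsupp
  rw [fsum_add] at key
  rw [show Jint ν₁ e₁ (c + c') = Jint ν₁ e₁ c + Jint ν₁ e₁ c' from fsum_add _ c c'] at key
  rw [show Jint ν₂ e₂ (d + d') = Jint ν₂ e₂ d + Jint ν₂ e₂ d' from fsum_add _ d d'] at key
  have hfe : (fun s => Phi e (w + w') s + Phi e₁ (c + c') s + Phi e₂ (d + d') s)
      = fun s => (Phi e w s + Phi e₁ c s + Phi e₂ d s - ind (e n) s)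
          + (Phi e w' s + Phi e₁ c' s + Phi e₂ d' s + ind (e n) s) := by
    funext s
    rw [show Phi e (w + w') s = Phi e w s + Phi e w' s from fsum_add _ w w',
      show Phi e₁ (c + c') s = Phi e₁ c s + Phi e₁ c' s from fsum_add _ c c',
      show Phi e₂ (d + d') s = Phi e₂ d s + Phi e₂ d' s from fsum_add _ d d']
    ring
  rw [hfe] at key
  have hB1 : BddF (fun s => Phi e w s + Phi e₁ c s + Phi e₂ d s - ind (e n) s) :=
    (((bddF_Phi e w).add (bddF_Phi e₁ c)).add (bddF_Phi e₂ d)).sub (bddF_ind _)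
  have hB2 : BddF (fun s => Phi e w' s + Phi e₁ c' s + Phi e₂ d' s + ind (e n) s) :=
    (((bddF_Phi e w').add (bddF_Phi e₁ c')).add (bddF_Phi e₂ d')).add (bddF_ind _)
  have hsub := msup_add_le hB1 hB2
  have := key.trans hsub
  simp only [gval]
  linarith

lemma bddAbove_gval {m : ℕ → ℝ} {n : ℕ} (hg : HBGood e e₁ e₂ ν₁ ν₂ n m) :
    BddAbove (Set.range (gval e e₁ e₂ ν₁ ν₂ m n)) := by
  refine ⟨msup (fun s => Phi e (0 : ℕ →₀ ℚ) s + Phi e₁ (0 : ℕ →₀ ℚ) s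
      + Phi e₂ (0 : ℕ →₀ ℚ) s + ind (e n) s)
    - (fsum m 0 + Jint ν₁ e₁ 0 + Jint ν₂ e₂ 0), ?_⟩
  rintro _ ⟨p, rfl⟩
  exact gval_le e e₁ e₂ ν₁ ν₂ hg p 0 0 0 (by simp)

lemma le_hbval {m : ℕ → ℝ} {n : ℕ} (hg : HBGood e e₁ e₂ ν₁ ν₂ n m) (p : HBIdx n) :
    gval e e₁ e₂ ν₁ ν₂ m n p ≤ hbval e e₁ e₂ ν₁ ν₂ m n :=
  le_ciSup (bddAbove_gval e e₁ e₂ ν₁ ν₂ hg) p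

lemma hbval_le {m : ℕ → ℝ} {n : ℕ} (hg : HBGood e e₁ e₂ ν₁ ν₂ n m)
    (w' c' d' : ℕ →₀ ℚ) (hw' : ∀ i ∈ w'.support, i < n) :
    hbval e e₁ e₂ ν₁ ν₂ m n ≤
      msup (fun s => Phi e w' s + Phi e₁ c' s + Phi e₂ d' s + ind (e n) s)
        - (fsum m w' + Jint ν₁ e₁ c' + Jint ν₂ e₂ d') :=
  ciSup_le (fun p => gval_le e e₁ e₂ ν₁ ν₂ hg p w' c' d' hw')

end HB

section HBStep

variable {S : Type*} [Nonempty S] (e e₁ e₂ : ℕ → Set S) (ν₁ ν₂ : Set S → ℝ)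

lemma good_succ {m : ℕ → ℝ} {n : ℕ} (hg : HBGood e e₁ e₂ ν₁ ν₂ n m) :
    HBGood e e₁ e₂ ν₁ ν₂ (n + 1)
      (Function.update m n (hbval e e₁ e₂ ν₁ ν₂ m n)) := by
  intro w c d hw
  have hw'n : ∀ i ∈ (w.erase n).support, i < n := by
    intro i hi
    rw [Finsupp.support_erase] at hi
    have hne := Finset.ne_of_mem_erase hi
    have := hw i (Finset.mem_of_mem_erase hi)
    omega
  have hfs : fsum (Function.update m n (hbval e e₁ e₂ ν₁ ν₂ m n)) w
      = fsum m (w.erase n) + (w n : ℝ) * hbval e e₁ e₂ ν₁ ν₂ m n := by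
    rw [fsum_decomp _ w n]
    congr 1
    · apply fsum_congr
      intro i hi
      rw [Finsupp.support_erase] at hi
      rw [Function.update_of_ne (Finset.ne_of_mem_erase hi)]
    · rw [Function.update_self]
  set F := fun s => Phi e (w.erase n) s + Phi e₁ c s + Phi e₂ d s
      + (w n : ℝ) * ind (e n) s with hF
  have hgoalfun : (fun s => Phi e w s + Phi e₁ c s + Phi e₂ d s) = F := by
    funext s
    simp only [hF]
    rw [Phi_apply_decomp e w n s]
    ring
  rw [hfs, hgoalfun]
  have hBF : BddF F :=
    (((bddF_Phi e (w.erase n)).add (bddF_Phi e₁ c)).add (bddF_Phi e₂ d)).add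
      ((bddF_ind (e n)).const_mul _)
  rcases lt_trichotomy ((w n : ℝ)) 0 with hq0 | hq0 | hq0
  · -- q < 0
    have hr0 : (0 : ℝ) < ((-(w n) : ℚ) : ℝ) := by push_cast; linarith
    have hrne : (((-(w n) : ℚ)) : ℝ) ≠ 0 := ne_of_gt hr0
    have hsupp : ∀ i ∈ (((-(w n))⁻¹ : ℚ) • w.erase n).support, i < n :=
      fun i hi => hw'n i (Finsupp.support_smul hi)
    have hp := le_hbval e e₁ e₂ ν₁ ν₂ hg
      ⟨⟨((-(w n))⁻¹ : ℚ) • w.erase n, hsupp⟩,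
        (((-(w n))⁻¹ : ℚ) • c, ((-(w n))⁻¹ : ℚ) • d)⟩
    unfold gval at hp
    simp only at hp
    rw [show fsum m (((-(w n))⁻¹ : ℚ) • w.erase n)
        = (((-(w n))⁻¹ : ℚ) : ℝ) * fsum m (w.erase n) from fsum_smul _ _ _,
      Jint_smul, Jint_smul] at hp
    have hinner : (fun s => Phi e (((-(w n))⁻¹ : ℚ) • w.erase n) s
        + Phi e₁ (((-(w n))⁻¹ : ℚ) • c) s
        + Phi e₂ (((-(w n))⁻¹ : ℚ) • d) s - ind (e n) s)
        = fun s => (((-(w n) : ℚ)) : ℝ)⁻¹ * F s := by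
      funext s
      rw [Phi_smul_apply, Phi_smul_apply, Phi_smul_apply]
      simp only [hF]
      push_cast
      have hne : ((w n : ℝ)) ≠ 0 := ne_of_lt hq0
      have hkey : (-((w n : ℝ)))⁻¹ * ((w n : ℝ)) = -1 := by
        rw [inv_neg, neg_mul, inv_mul_cancel₀ hne]
      linear_combination (-(ind (e n) s)) * hkey
    rw [hinner, msup_const_mul (inv_pos.2 hr0) hBF,
      show ((((-(w n))⁻¹ : ℚ)) : ℝ) = (((-(w n) : ℚ)) : ℝ)⁻¹ by push_cast; ring] at hp
    have h2 := mul_le_mul_of_nonneg_left hp hr0.le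
    have h4 : (((-(w n) : ℚ)) : ℝ) * ((((-(w n) : ℚ)) : ℝ)⁻¹ * fsum m (w.erase n)
          + (((-(w n) : ℚ)) : ℝ)⁻¹ * Jint ν₁ e₁ c
          + (((-(w n) : ℚ)) : ℝ)⁻¹ * Jint ν₂ e₂ d
          - (((-(w n) : ℚ)) : ℝ)⁻¹ * msup F)
        = fsum m (w.erase n) + Jint ν₁ e₁ c + Jint ν₂ e₂ d - msup F := by
      rw [mul_sub, mul_add, mul_add]
      simp only [← mul_assoc, mul_inv_cancel₀ hrne, one_mul]
    rw [h4] at h2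
    have hcast : (((-(w n) : ℚ)) : ℝ) = -((w n : ℝ)) := by push_cast; ring
    rw [hcast] at h2
    linarith
  · -- q = 0
    rw [hq0]
    have hFeq : F = fun s => Phi e (w.erase n) s + Phi e₁ c s + Phi e₂ d s := by
      funext s
      simp only [hF, hq0]
      ring
    rw [hFeq]
    have base := hg (w.erase n) c d hw'n
    linarith
  · -- q > 0
    have hqne : ((w n : ℝ)) ≠ 0 := ne_of_gt hq0
    have hsupp : ∀ i ∈ (((w n)⁻¹ : ℚ) • w.erase n).support, i < n :=
      fun i hi => hw'n i (Finsupp.support_smul hi)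
    have hub := hbval_le e e₁ e₂ ν₁ ν₂ hg (((w n)⁻¹ : ℚ) • w.erase n)
      (((w n)⁻¹ : ℚ) • c) (((w n)⁻¹ : ℚ) • d) hsupp
    rw [show fsum m (((w n)⁻¹ : ℚ) • w.erase n)
        = (((w n)⁻¹ : ℚ) : ℝ) * fsum m (w.erase n) from fsum_smul _ _ _,
      Jint_smul, Jint_smul] at hub
    have hinner : (fun s => Phi e (((w n)⁻¹ : ℚ) • w.erase n) s
        + Phi e₁ (((w n)⁻¹ : ℚ) • c) s
        + Phi e₂ (((w n)⁻¹ : ℚ) • d) s + ind (e n) s)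
        = fun s => ((w n : ℝ))⁻¹ * F s := by
      funext s
      rw [Phi_smul_apply, Phi_smul_apply, Phi_smul_apply]
      simp only [hF]
      push_cast
      have hkey : ((w n : ℝ))⁻¹ * ((w n : ℝ)) = 1 := inv_mul_cancel₀ hqne
      linear_combination (-(ind (e n) s)) * hkey
    rw [hinner, msup_const_mul (inv_pos.2 hq0) hBF,
      show ((((w n)⁻¹ : ℚ)) : ℝ) = ((w n : ℝ))⁻¹ by push_cast; ring] at hub
    have h2 := mul_le_mul_of_nonneg_left hub hq0.le
    have h4 : ((w n : ℝ)) * (((w n : ℝ))⁻¹ * msup F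
          - (((w n : ℝ))⁻¹ * fsum m (w.erase n)
            + ((w n : ℝ))⁻¹ * Jint ν₁ e₁ c + ((w n : ℝ))⁻¹ * Jint ν₂ e₂ d))
        = msup F - (fsum m (w.erase n) + Jint ν₁ e₁ c + Jint ν₂ e₂ d) := by
      rw [mul_sub, mul_add, mul_add]
      simp only [← mul_assoc, mul_inv_cancel₀ hqne, one_mul]
    rw [h4] at h2
    linarith

end HBStep

section HBAll

variable {S : Type*} [Nonempty S] (e e₁ e₂ : ℕ → Set S) (ν₁ ν₂ : Set S → ℝ)
variable {𝔄₁ 𝔄₂ : Set (Set S)}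

lemma good_hbseq (halg₁ : IsSetAlg 𝔄₁) (halg₂ : IsSetAlg 𝔄₂)
    (hν₁ : IsFinAddProb 𝔄₁ ν₁) (hν₂ : IsFinAddProb 𝔄₂ ν₂)
    (he₁ : ∀ i, e₁ i ∈ 𝔄₁) (he₂ : ∀ i, e₂ i ∈ 𝔄₂)
    (hcomp : ∀ A₁ ∈ 𝔄₁, ∀ A₂ ∈ 𝔄₂, Disjoint A₁ A₂ → ν₁ A₁ + ν₂ A₂ ≤ 1) :
    ∀ n, HBGood e e₁ e₂ ν₁ ν₂ n (hbseq e e₁ e₂ ν₁ ν₂ n) := by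
  intro n
  induction n with
  | zero => exact good_zero e e₁ e₂ ν₁ ν₂ halg₁ halg₂ hν₁ hν₂ he₁ he₂ hcomp _
  | succ n ih => exact good_succ e e₁ e₂ ν₁ ν₂ ih

lemma good_all (halg₁ : IsSetAlg 𝔄₁) (halg₂ : IsSetAlg 𝔄₂)
    (hν₁ : IsFinAddProb 𝔄₁ ν₁) (hν₂ : IsFinAddProb 𝔄₂ ν₂)
    (he₁ : ∀ i, e₁ i ∈ 𝔄₁) (he₂ : ∀ i, e₂ i ∈ 𝔄₂)
    (hcomp : ∀ A₁ ∈ 𝔄₁, ∀ A₂ ∈ 𝔄₂, Disjoint A₁ A₂ → ν₁ A₁ + ν₂ A₂ ≤ 1)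
    (w c d : ℕ →₀ ℚ) :
    fsum (mu e e₁ e₂ ν₁ ν₂) w + Jint ν₁ e₁ c + Jint ν₂ e₂ d ≤
      msup (fun s => Phi e w s + Phi e₁ c s + Phi e₂ d s) := by
  set n := w.support.sup id + 1 with hn
  have hgood : HBGood e e₁ e₂ ν₁ ν₂ n (mu e e₁ e₂ ν₁ ν₂) :=
    good_congr e e₁ e₂ ν₁ ν₂ (fun i hi => hbseq_eq e e₁ e₂ ν₁ ν₂ n i hi)
      (good_hbseq e e₁ e₂ ν₁ ν₂ halg₁ halg₂ hν₁ hν₂ he₁ he₂ hcomp n)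
  apply hgood w c d
  intro i hi
  have : i ≤ w.support.sup id := Finset.le_sup (f := id) hi
  omega

end HBAll

section Meas

variable {X : Type*} [MeasurableSpace X] {S : Type*}
  (e e₁ e₂ : ℕ → Set S) (ν₁ ν₂ : X → Set S → ℝ)

lemma measurable_hbseq
    (hm₁ : ∀ i, Measurable fun x => ν₁ x (e₁ i))
    (hm₂ : ∀ i, Measurable fun x => ν₂ x (e₂ i)) :
    ∀ k n, Measurable fun x => hbseq e e₁ e₂ (ν₁ x) (ν₂ x) k n := by
  intro k
  induction k with
  | zero =>
    intro n
    show Measurable fun _ => (0 : ℝ)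
    exact measurable_const
  | succ k ih =>
    intro n
    by_cases hn : n = k
    · subst hn
      have heq : (fun x => hbseq e e₁ e₂ (ν₁ x) (ν₂ x) (n + 1) n)
          = fun x => ⨆ p : HBIdx n,
              gval e e₁ e₂ (ν₁ x) (ν₂ x) (hbseq e e₁ e₂ (ν₁ x) (ν₂ x) n) n p := by
        funext x
        show Function.update _ n _ n = _
        rw [Function.update_self]
        rfl
      rw [heq]
      apply Measurable.iSup
      rintro ⟨⟨w, hw⟩, c, d⟩
      have hg : ∀ x, gval e e₁ e₂ (ν₁ x) (ν₂ x) (hbseq e e₁ e₂ (ν₁ x) (ν₂ x) n) n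
            ⟨⟨w, hw⟩, c, d⟩
          = (∑ i ∈ w.support, (w i : ℝ) * hbseq e e₁ e₂ (ν₁ x) (ν₂ x) n i)
            + (∑ i ∈ c.support, (c i : ℝ) * ν₁ x (e₁ i))
            + (∑ i ∈ d.support, (d i : ℝ) * ν₂ x (e₂ i))
            - msup (fun s => Phi e w s + Phi e₁ c s + Phi e₂ d s - ind (e n) s) :=
        fun x => rfl
      simp only [hg]
      apply Measurable.sub
      · apply Measurable.add
        apply Measurable.add
        · exact Finset.measurable_sum _ (fun i _ => (ih i).const_mul _)
        · exact Finset.measurable_sum _ (fun i _ => (hm₁ i).const_mul _)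
        · exact Finset.measurable_sum _ (fun i _ => (hm₂ i).const_mul _)
      · exact measurable_const
    · have heq : (fun x => hbseq e e₁ e₂ (ν₁ x) (ν₂ x) (k + 1) n)
          = fun x => hbseq e e₁ e₂ (ν₁ x) (ν₂ x) k n := by
        funext x
        show Function.update _ k _ n = _
        rw [Function.update_of_ne hn]
      rw [heq]
      exact ih n

lemma measurable_mu
    (hm₁ : ∀ i, Measurable fun x => ν₁ x (e₁ i))
    (hm₂ : ∀ i, Measurable fun x => ν₂ x (e₂ i)) (n : ℕ) :
    Measurable fun x => mu e e₁ e₂ (ν₁ x) (ν₂ x) n :=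
  measurable_hbseq e e₁ e₂ ν₁ ν₂ hm₁ hm₂ (n + 1) n

end Meas

section Helpers

variable {S : Type*}

lemma Phi_single_apply (E : ℕ → Set S) (n : ℕ) (q : ℚ) (s : S) :
    Phi E (Finsupp.single n q) s = (q : ℝ) * ind (E n) s := fsum_single _ _ _

lemma Phi_sub_apply (E : ℕ → Set S) (w v : ℕ →₀ ℚ) (s : S) :
    Phi E (w - v) s = Phi E w s - Phi E v s := fsum_sub _ _ _

lemma Jint_single (ν : Set S → ℝ) (E : ℕ → Set S) (i : ℕ) (q : ℚ) :
    Jint ν E (Finsupp.single i q) = (q : ℝ) * ν (E i) := fsum_single _ _ _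

@[simp] lemma ind_empty (s : S) : ind (∅ : Set S) s = 0 := by
  classical
  rw [ind_apply]; simp

@[simp] lemma ind_univ (s : S) : ind (Set.univ : Set S) s = 1 := by
  classical
  rw [ind_apply]; simp

lemma ind_nonneg (A : Set S) (s : S) : 0 ≤ ind A s := by
  classical
  rw [ind_apply]; split <;> norm_num

lemma ind_le_one (A : Set S) (s : S) : ind A s ≤ 1 := by
  classical
  rw [ind_apply]; split <;> norm_num

lemma ind_union {A B : Set S} (hd : Disjoint A B) (s : S) :
    ind (A ∪ B) s = ind A s + ind B s := by
  classical
  rw [ind_apply, ind_apply, ind_apply]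
  by_cases hA : s ∈ A
  · have hB : s ∉ B := fun hB => (Set.disjoint_left.1 hd hA) hB
    simp [hA, hB]
  · by_cases hB : s ∈ B
    · simp [hA, hB]
    · simp [hA, hB]

end Helpers

end MCFAE

open MCFAE

/-- Measurable-in-parameter common extension of finitely additive probability
measures: two compatible families on subalgebras of a countable algebra `𝔄`,
measurable in the parameter `x`, have a common finitely additive extension to `𝔄`
which is still measurable in `x`. -/
theorem measurable_common_finitely_additive_extension
    {X S₃ : Type*} [MeasurableSpace X]
    (𝔄 𝔄₁ 𝔄₂ : Set (Set S₃)) (hcount : 𝔄.Countable)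
    (halg : IsSetAlg 𝔄) (halg₁ : IsSetAlg 𝔄₁) (halg₂ : IsSetAlg 𝔄₂)
    (hsub₁ : 𝔄₁ ⊆ 𝔄) (hsub₂ : 𝔄₂ ⊆ 𝔄)
    (ν₁ : X → Set S₃ → ℝ) (ν₂ : X → Set S₃ → ℝ)
    (hν₁ : ∀ x, IsFinAddProb 𝔄₁ (ν₁ x)) (hν₂ : ∀ x, IsFinAddProb 𝔄₂ (ν₂ x))
    (hmeas₁ : ∀ A ∈ 𝔄₁, Measurable fun x => ν₁ x A)
    (hmeas₂ : ∀ A ∈ 𝔄₂, Measurable fun x => ν₂ x A)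
    (hcomp : ∀ x, ∀ A₁ ∈ 𝔄₁, ∀ A₂ ∈ 𝔄₂, Disjoint A₁ A₂ →
      ν₁ x A₁ + ν₂ x A₂ ≤ 1) :
    ∃ ν₃ : X → Set S₃ → ℝ,
      (∀ x, IsFinAddProb 𝔄 (ν₃ x)) ∧
      (∀ x, ∀ A ∈ 𝔄₁, ν₃ x A = ν₁ x A) ∧
      (∀ x, ∀ A ∈ 𝔄₂, ν₃ x A = ν₂ x A) ∧
      (∀ A ∈ 𝔄, Measurable fun x => ν₃ x A) := by
  classical
  rcases isEmpty_or_nonempty X with hX | hX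
  · exact ⟨fun _ _ => 0, fun x => (IsEmpty.false x).elim, fun x => (IsEmpty.false x).elim,
      fun x => (IsEmpty.false x).elim, fun A _ => measurable_const⟩
  rcases isEmpty_or_nonempty S₃ with hS | hS
  · exfalso
    obtain ⟨x⟩ := hX
    have h0 := (hν₁ x).1
    have h1 := (hν₁ x).2.1
    rw [Set.univ_eq_empty_iff.2 hS, h0] at h1
    exact zero_ne_one h1
  obtain ⟨e, he⟩ := hcount.exists_eq_range ⟨∅, halg.1⟩
  obtain ⟨e₁, he₁⟩ := (hcount.mono hsub₁).exists_eq_range ⟨∅, halg₁.1⟩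
  obtain ⟨e₂, he₂⟩ := (hcount.mono hsub₂).exists_eq_range ⟨∅, halg₂.1⟩
  have heM : ∀ n, e n ∈ 𝔄 := fun n => he ▸ Set.mem_range_self n
  have he₁M : ∀ n, e₁ n ∈ 𝔄₁ := fun n => he₁ ▸ Set.mem_range_self n
  have he₂M : ∀ n, e₂ n ∈ 𝔄₂ := fun n => he₂ ▸ Set.mem_range_self n
  have hidx : ∀ A, A ∈ 𝔄 → ∃ n, e n = A := by
    intro A hA
    rwa [he, Set.mem_range] at hA
  choose nOf hnOf using hidx
  set MU : X → ℕ → ℝ := fun x => mu e e₁ e₂ (ν₁ x) (ν₂ x) with hMU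
  have hbound : ∀ (x : X) (w c d : ℕ →₀ ℚ) (B : ℝ),
      (∀ s, Phi e w s + Phi e₁ c s + Phi e₂ d s ≤ B) →
      fsum (MU x) w + Jint (ν₁ x) e₁ c + Jint (ν₂ x) e₂ d ≤ B := by
    intro x w c d B hB
    exact (good_all e e₁ e₂ (ν₁ x) (ν₂ x) halg₁ halg₂ (hν₁ x) (hν₂ x) he₁M he₂M
      (fun A₁ h₁ A₂ h₂ hd => hcomp x A₁ h₁ A₂ h₂ hd) w c d).trans (msup_le hB)
  -- basic one-coordinate bounds
  have hup : ∀ (x : X) (n : ℕ) (B : ℝ), (∀ s, ind (e n) s ≤ B) → MU x n ≤ B := by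
    intro x n B hB
    have hpt : ∀ s, Phi e (Finsupp.single n 1) s + Phi e₁ (0 : ℕ →₀ ℚ) s
        + Phi e₂ (0 : ℕ →₀ ℚ) s ≤ B := by
      intro s
      rw [Phi_single_apply, Phi_zero_apply, Phi_zero_apply]
      push_cast
      have := hB s
      linarith
    have h := hbound x (Finsupp.single n 1) 0 0 B hpt
    rw [fsum_single, Jint_zero, Jint_zero] at h
    push_cast at h
    linarith
  have hlow : ∀ (x : X) (n : ℕ) (B : ℝ), (∀ s, -ind (e n) s ≤ B) → -(MU x n) ≤ B := by
    intro x n B hB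
    have hpt : ∀ s, Phi e (Finsupp.single n (-1)) s + Phi e₁ (0 : ℕ →₀ ℚ) s
        + Phi e₂ (0 : ℕ →₀ ℚ) s ≤ B := by
      intro s
      rw [Phi_single_apply, Phi_zero_apply, Phi_zero_apply]
      push_cast
      have := hB s
      linarith
    have h := hbound x (Finsupp.single n (-1)) 0 0 B hpt
    rw [fsum_single, Jint_zero, Jint_zero] at h
    push_cast at h
    linarith
  -- value of MU at the canonical index of a set
  -- empty set
  have hMU0 : ∀ x, MU x (nOf ∅ halg.1) = 0 := by
    intro x
    have h1 := hup x (nOf ∅ halg.1) 0 (fun s => by rw [hnOf ∅ halg.1, ind_empty])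
    have h2 := hlow x (nOf ∅ halg.1) 0 (fun s => by rw [hnOf ∅ halg.1, ind_empty]; simp)
    linarith
  -- universe
  have hMU1 : ∀ x, MU x (nOf Set.univ (univ_mem halg)) = 1 := by
    intro x
    have h1 := hup x (nOf Set.univ (univ_mem halg)) 1
      (fun s => by rw [hnOf Set.univ (univ_mem halg), ind_univ])
    have h2 := hlow x (nOf Set.univ (univ_mem halg)) (-1)
      (fun s => by rw [hnOf Set.univ (univ_mem halg), ind_univ])
    linarith
  -- bounds
  have hMUb : ∀ x (A : Set S₃) (hA : A ∈ 𝔄), 0 ≤ MU x (nOf A hA) ∧ MU x (nOf A hA) ≤ 1 := by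
    intro x A hA
    constructor
    · have := hlow x (nOf A hA) 0 (fun s => by
        have := ind_nonneg (e (nOf A hA)) s; linarith)
      linarith
    · exact hup x (nOf A hA) 1 (fun s => ind_le_one _ s)
  -- additivity
  have hMUadd : ∀ x (A B : Set S₃) (hA : A ∈ 𝔄) (hB : B ∈ 𝔄) (hd : Disjoint A B),
      MU x (nOf (A ∪ B) (halg.2.2 A hA B hB)) = MU x (nOf A hA) + MU x (nOf B hB) := by
    intro x A B hA hB hd
    have hU : A ∪ B ∈ 𝔄 := halg.2.2 A hA B hB
    have hptw : ∀ (σ : ℚ) (s : S₃),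
        Phi e (σ • (Finsupp.single (nOf (A ∪ B) hU) (1:ℚ) - Finsupp.single (nOf A hA) 1
          - Finsupp.single (nOf B hB) 1)) s + Phi e₁ (0 : ℕ →₀ ℚ) s
          + Phi e₂ (0 : ℕ →₀ ℚ) s ≤ 0 := by
      intro σ s
      rw [Phi_smul_apply, Phi_sub_apply, Phi_sub_apply, Phi_single_apply, Phi_single_apply,
        Phi_single_apply, Phi_zero_apply, Phi_zero_apply, hnOf (A ∪ B) hU, hnOf A hA,
        hnOf B hB, ind_union hd]
      push_cast
      ring_nf
      simp
    have key : ∀ σ : ℚ, (σ : ℝ) * (MU x (nOf (A ∪ B) hU) - MU x (nOf A hA)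
        - MU x (nOf B hB)) ≤ 0 := by
      intro σ
      have h := hbound x (σ • (Finsupp.single (nOf (A ∪ B) hU) (1:ℚ)
        - Finsupp.single (nOf A hA) 1 - Finsupp.single (nOf B hB) 1)) 0 0 0 (hptw σ)
      rw [fsum_smul, fsum_sub, fsum_sub, fsum_single, fsum_single, fsum_single,
        Jint_zero, Jint_zero] at h
      push_cast at h
      linarith
    have k1 := key 1
    have k2 := key (-1)
    push_cast at k1 k2
    linarith
  -- extension of ν₁
  have hext₁ : ∀ x (A : Set S₃) (hA1 : A ∈ 𝔄₁), MU x (nOf A (hsub₁ hA1)) = ν₁ x A := by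
    intro x A hA1
    obtain ⟨i, hi⟩ : ∃ i, e₁ i = A := by
      have : A ∈ Set.range e₁ := he₁ ▸ hA1
      rwa [Set.mem_range] at this
    have hen : e (nOf A (hsub₁ hA1)) = A := hnOf A (hsub₁ hA1)
    have hpt1 : ∀ s, Phi e (Finsupp.single (nOf A (hsub₁ hA1)) 1) s
        + Phi e₁ (Finsupp.single i (-1)) s + Phi e₂ (0 : ℕ →₀ ℚ) s ≤ 0 := by
      intro s
      rw [Phi_single_apply, Phi_single_apply, Phi_zero_apply, hen, hi]
      push_cast
      ring_nf
      simp
    have hpt2 : ∀ s, Phi e (Finsupp.single (nOf A (hsub₁ hA1)) (-1)) s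
        + Phi e₁ (Finsupp.single i 1) s + Phi e₂ (0 : ℕ →₀ ℚ) s ≤ 0 := by
      intro s
      rw [Phi_single_apply, Phi_single_apply, Phi_zero_apply, hen, hi]
      push_cast
      ring_nf
      simp
    have h1 := hbound x (Finsupp.single (nOf A (hsub₁ hA1)) 1) (Finsupp.single i (-1)) 0 0 hpt1
    have h2 := hbound x (Finsupp.single (nOf A (hsub₁ hA1)) (-1)) (Finsupp.single i 1) 0 0 hpt2
    rw [fsum_single, Jint_single, Jint_zero, hi] at h1 h2
    push_cast at h1 h2
    linarith
  -- extension of ν₂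
  have hext₂ : ∀ x (A : Set S₃) (hA2 : A ∈ 𝔄₂), MU x (nOf A (hsub₂ hA2)) = ν₂ x A := by
    intro x A hA2
    obtain ⟨i, hi⟩ : ∃ i, e₂ i = A := by
      have : A ∈ Set.range e₂ := he₂ ▸ hA2
      rwa [Set.mem_range] at this
    have hen : e (nOf A (hsub₂ hA2)) = A := hnOf A (hsub₂ hA2)
    have hpt1 : ∀ s, Phi e (Finsupp.single (nOf A (hsub₂ hA2)) 1) s
        + Phi e₁ (0 : ℕ →₀ ℚ) s + Phi e₂ (Finsupp.single i (-1)) s ≤ 0 := by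
      intro s
      rw [Phi_single_apply, Phi_single_apply, Phi_zero_apply, hen, hi]
      push_cast
      ring_nf
      simp
    have hpt2 : ∀ s, Phi e (Finsupp.single (nOf A (hsub₂ hA2)) (-1)) s
        + Phi e₁ (0 : ℕ →₀ ℚ) s + Phi e₂ (Finsupp.single i 1) s ≤ 0 := by
      intro s
      rw [Phi_single_apply, Phi_single_apply, Phi_zero_apply, hen, hi]
      push_cast
      ring_nf
      simp
    have h1 := hbound x (Finsupp.single (nOf A (hsub₂ hA2)) 1) 0 (Finsupp.single i (-1)) 0 hpt1
    have h2 := hbound x (Finsupp.single (nOf A (hsub₂ hA2)) (-1)) 0 (Finsupp.single i 1) 0 hpt2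
    rw [fsum_single, Jint_single, Jint_zero, hi] at h1 h2
    push_cast at h1 h2
    linarith
  -- the extension
  refine ⟨fun x A => if h : A ∈ 𝔄 then MU x (nOf A h) else 0, ?_, ?_, ?_, ?_⟩
  · intro x
    refine ⟨?_, ?_, ?_, ?_⟩
    · simp only [dif_pos halg.1]
      exact hMU0 x
    · simp only [dif_pos (univ_mem halg)]
      exact hMU1 x
    · intro A hA
      simp only [dif_pos hA]
      exact hMUb x A hA
    · intro A hA B hB hd
      simp only [dif_pos hA, dif_pos hB, dif_pos (halg.2.2 A hA B hB)]
      exact hMUadd x A B hA hB hd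
  · intro x A hA1
    simp only [dif_pos (hsub₁ hA1)]
    exact hext₁ x A hA1
  · intro x A hA2
    simp only [dif_pos (hsub₂ hA2)]
    exact hext₂ x A hA2
  · intro A hA
    simp only [dif_pos hA]
    exact measurable_mu e e₁ e₂ ν₁ ν₂ (fun i => hmeas₁ _ (he₁M i))
      (fun i => hmeas₂ _ (he₂M i)) _
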